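/- Let τ > 0 and μ > 0 be real constants, and let ε : [0,∞) → ℝ be twice continuously differentiable such that the function g(t) = τε''(t) + ε'(t) + με(t) satisfies ∫_0^∞ |g(t)|² dt < ∞. Then ∫_0^∞ |ε(t)|² dt < ∞, ∫_0^∞ |ε'(t)|² dt < ∞, and ε(t) → 0 as t → ∞. -/

import Mathlib

open MeasureTheory

set_option maxHeartbeats 1000000 in
/-- L²-input implies L²-state for the exponentially stable system
`τε'' + ε' + με = g` (`τ, μ > 0`): if `∫_0^∞ |g|² < ∞` then
`∫_0^∞ |ε|² < ∞`, `∫_0^∞ |ε'|² < ∞` and `ε(t) → 0` as `t → ∞`. -/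
theorem second_order_stable_L2_input_L2_state
    (τ μ : ℝ) (hτ : 0 < τ) (hμ : 0 < μ)
    (ε : ℝ → ℝ) (hε : ContDiff ℝ 2 ε)
    (g : ℝ → ℝ)
    (hg : ∀ t, g t = τ * deriv (deriv ε) t + deriv ε t + μ * ε t)
    (hg_L2 : IntegrableOn (fun t => |g t| ^ 2) (Set.Ici (0 : ℝ))) :
    IntegrableOn (fun t => |ε t| ^ 2) (Set.Ici (0 : ℝ)) ∧
    IntegrableOn (fun t => |deriv ε t| ^ 2) (Set.Ici (0 : ℝ)) ∧
    Filter.Tendsto ε Filter.atTop (nhds 0) := by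
  -- smoothness unpacking
  have h2 : ContDiff ℝ ((1:ℕ∞)+1) ε := by exact_mod_cast hε
  obtain ⟨hdiff, -, h1⟩ := contDiff_succ_iff_deriv.mp h2
  have h1' : ContDiff ℝ ((0:ℕ∞)+1) (deriv ε) := by exact_mod_cast h1
  obtain ⟨hdiff2, -, h0⟩ := contDiff_succ_iff_deriv.mp h1'
  set d := deriv ε with hd_def
  set dd := deriv d with hdd_def
  have cε : Continuous ε := hdiff.continuous
  have cd : Continuous d := hdiff2.continuous
  have cdd : Continuous dd := h0.continuous
  have hd : ∀ t, HasDerivAt ε (d t) t := fun t => (hdiff t).hasDerivAt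
  have hdd : ∀ t, HasDerivAt d (dd t) t := fun t => (hdiff2 t).hasDerivAt
  have cg : Continuous g := by
    have hgf : g = fun t => τ * dd t + d t + μ * ε t := funext hg
    rw [hgf]; fun_prop
  -- integrability of g²
  have hg2 : IntegrableOn (fun t => g t ^ 2) (Set.Ici (0:ℝ)) := by
    simpa [sq_abs] using hg_L2
  set Ig := ∫ t in Set.Ici (0:ℝ), g t ^ 2 with hIg
  have hIg0 : 0 ≤ Ig := setIntegral_nonneg measurableSet_Ici (fun x _ => sq_nonneg _)
  have hgT : ∀ T, 0 ≤ T → (∫ t in (0:ℝ)..T, g t ^ 2) ≤ Ig := by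
    intro T hT
    rw [intervalIntegral.integral_of_le hT]
    apply setIntegral_mono_set hg2 (Filter.Eventually.of_forall (fun x => sq_nonneg _))
    exact (Set.Ioc_subset_Ioi_self.trans Set.Ioi_subset_Ici_self).eventuallyLE
  -- generic FTC
  have FTC : ∀ (f f' : ℝ → ℝ), (∀ t, HasDerivAt f (f' t) t) → Continuous f' → ∀ T : ℝ,
      f T - f 0 = ∫ t in (0:ℝ)..T, f' t := by
    intro f f' hf hf' T
    rw [intervalIntegral.integral_eq_sub_of_hasDerivAt (fun x _ => hf x)
      (hf'.intervalIntegrable 0 T)]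
  -- Lyapunov function F
  set F := fun t => μ * ε t ^ 2 + τ * d t ^ 2 with hF_def
  have hFval : ∀ t, F t = μ * ε t ^ 2 + τ * d t ^ 2 := fun t => rfl
  have hF : ∀ t, HasDerivAt F (2 * d t * g t - 2 * d t ^ 2) t := by
    intro t
    have h1 := ((hd t).pow 2).const_mul μ
    have h2 := ((hdd t).pow 2).const_mul τ
    have h3 := h1.add h2
    exact h3.congr_deriv (by rw [hg t]; push_cast; ring)
  have key1 : ∀ T, 0 ≤ T → F T + (∫ t in (0:ℝ)..T, d t ^ 2) ≤ F 0 + Ig := by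
    intro T hT
    have e1 : F T - F 0 = ∫ t in (0:ℝ)..T, (2 * d t * g t - 2 * d t ^ 2) :=
      FTC _ _ hF (by fun_prop) T
    have e2 : (∫ t in (0:ℝ)..T, (2 * d t * g t - 2 * d t ^ 2))
        ≤ ∫ t in (0:ℝ)..T, (g t ^ 2 - d t ^ 2) := by
      apply intervalIntegral.integral_mono_on hT
        ((by fun_prop : Continuous fun t => 2 * d t * g t - 2 * d t ^ 2).intervalIntegrable 0 T)
        ((by fun_prop : Continuous fun t => g t ^ 2 - d t ^ 2).intervalIntegrable 0 T)
      intro x _; nlinarith [sq_nonneg (g x - d x)]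
    have e3 : (∫ t in (0:ℝ)..T, (g t ^ 2 - d t ^ 2))
        = (∫ t in (0:ℝ)..T, g t ^ 2) - ∫ t in (0:ℝ)..T, d t ^ 2 :=
      intervalIntegral.integral_sub ((cg.pow 2).intervalIntegrable 0 T)
        ((cd.pow 2).intervalIntegrable 0 T)
    have e4 := hgT T hT
    linarith
  set B := F 0 + Ig with hB_def
  have hFnn : ∀ t, 0 ≤ F t := fun t => by rw [hFval]; positivity
  have hdint_nn : ∀ T, 0 ≤ T → 0 ≤ (∫ t in (0:ℝ)..T, d t ^ 2) :=
    fun T hT => intervalIntegral.integral_nonneg hT (fun x _ => sq_nonneg _)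
  have hFbd : ∀ T, 0 ≤ T → F T ≤ B := fun T hT => by
    have := key1 T hT; have := hdint_nn T hT; linarith
  have hdint_bd : ∀ T, 0 ≤ T → (∫ t in (0:ℝ)..T, d t ^ 2) ≤ B := fun T hT => by
    have := key1 T hT; have := hFnn T; linarith
  -- ∫ d² < ∞
  have hd2_int : IntegrableOn (fun t => d t ^ 2) (Set.Ici (0:ℝ)) := by
    rw [integrableOn_Ici_iff_integrableOn_Ioi]
    apply integrableOn_Ioi_of_intervalIntegral_norm_bounded B 0
      (fun i : ℝ => (cd.pow 2).integrableOn_Ioc) Filter.tendsto_id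
    filter_upwards [Filter.eventually_ge_atTop (0:ℝ)] with T hT
    simpa [Real.norm_eq_abs, abs_pow, sq_abs] using hdint_bd T hT
  -- pointwise bounds
  have hεbd : ∀ T, 0 ≤ T → μ * ε T ^ 2 ≤ B := fun T hT => by
    have h := hFbd T hT; rw [hFval] at h; nlinarith [sq_nonneg (d T)]
  have hdbd : ∀ T, 0 ≤ T → τ * d T ^ 2 ≤ B := fun T hT => by
    have h := hFbd T hT; rw [hFval] at h; nlinarith [sq_nonneg (ε T)]
  -- cross term G
  set G := fun t => τ * ε t * d t + ε t ^ 2 / 2 with hG_def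
  have hGval : ∀ t, G t = τ * ε t * d t + ε t ^ 2 / 2 := fun t => rfl
  have hG : ∀ t, HasDerivAt G (τ * d t ^ 2 + ε t * g t - μ * ε t ^ 2) t := by
    intro t
    have h1 := ((hd t).const_mul τ).mul (hdd t)
    have h2 := ((hd t).pow 2).div_const 2
    have h3 := h1.add h2
    exact h3.congr_deriv (by rw [hg t]; push_cast; ring)
  set S := G 0 + τ * B + 1/(2*μ) * Ig + τ/2 * (B/μ + B/τ) with hS_def
  have key2 : ∀ T, 0 ≤ T → μ/2 * (∫ t in (0:ℝ)..T, ε t ^ 2) ≤ S := by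
    intro T hT
    have e1 : G T - G 0 = ∫ t in (0:ℝ)..T, (τ * d t ^ 2 + ε t * g t - μ * ε t ^ 2) :=
      FTC _ _ hG (by fun_prop) T
    have e2 : (∫ t in (0:ℝ)..T, (τ * d t ^ 2 + ε t * g t - μ * ε t ^ 2))
        ≤ ∫ t in (0:ℝ)..T, (τ * d t ^ 2 + 1/(2*μ) * g t ^ 2 - μ/2 * ε t ^ 2) := by
      apply intervalIntegral.integral_mono_on hT
        ((by fun_prop : Continuous fun t => τ * d t ^ 2 + ε t * g t - μ * ε t ^ 2).intervalIntegrable 0 T)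
        ((by fun_prop : Continuous fun t => τ * d t ^ 2 + 1/(2*μ) * g t ^ 2 - μ/2 * ε t ^ 2).intervalIntegrable 0 T)
      intro x _
      have key : ε x * g x ≤ μ/2 * ε x ^ 2 + 1/(2*μ) * g x ^ 2 := by
        rw [← sub_nonneg]
        have hq : μ/2 * ε x ^ 2 + 1/(2*μ) * g x ^ 2 - ε x * g x
            = (μ * ε x - g x)^2 / (2*μ) := by
          field_simp; ring
        rw [hq]; positivity
      linarith
    have e3 : (∫ t in (0:ℝ)..T, (τ * d t ^ 2 + 1/(2*μ) * g t ^ 2 - μ/2 * ε t ^ 2))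
        = τ * (∫ t in (0:ℝ)..T, d t ^ 2) + 1/(2*μ) * (∫ t in (0:ℝ)..T, g t ^ 2)
          - μ/2 * (∫ t in (0:ℝ)..T, ε t ^ 2) := by
      rw [intervalIntegral.integral_sub
        (((by fun_prop : Continuous fun t => τ * d t ^ 2 + 1/(2*μ) * g t ^ 2)).intervalIntegrable 0 T)
        ((by fun_prop : Continuous fun t => μ/2 * ε t ^ 2).intervalIntegrable 0 T),
        intervalIntegral.integral_add
          ((by fun_prop : Continuous fun t => τ * d t ^ 2).intervalIntegrable 0 T)
          ((by fun_prop : Continuous fun t => 1/(2*μ) * g t ^ 2).intervalIntegrable 0 T),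
        intervalIntegral.integral_const_mul, intervalIntegral.integral_const_mul,
        intervalIntegral.integral_const_mul]
    have e4 : 1/(2*μ) * (∫ t in (0:ℝ)..T, g t ^ 2) ≤ 1/(2*μ) * Ig :=
      mul_le_mul_of_nonneg_left (hgT T hT) (by positivity)
    have e5 : τ * (∫ t in (0:ℝ)..T, d t ^ 2) ≤ τ * B :=
      mul_le_mul_of_nonneg_left (hdint_bd T hT) hτ.le
    have e6 : -G T ≤ τ/2 * (B/μ + B/τ) := by
      have b1 := hεbd T hT
      have b2 := hdbd T hT
      have b3 : -(τ * (ε T * d T)) ≤ τ/2 * (ε T ^ 2 + d T ^ 2) := by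
        nlinarith [mul_nonneg hτ.le (sq_nonneg (ε T + d T))]
      have b4 : ε T ^ 2 ≤ B / μ := by rw [le_div_iff₀ hμ]; linarith
      have b5 : d T ^ 2 ≤ B / τ := by rw [le_div_iff₀ hτ]; linarith
      have b6 : (0:ℝ) ≤ ε T ^ 2 / 2 := by positivity
      have b7 : τ/2 * (ε T ^ 2 + d T ^ 2) ≤ τ/2 * (B/μ + B/τ) := by
        apply mul_le_mul_of_nonneg_left (by linarith) (by positivity)
      rw [hGval]
      nlinarith
    rw [hS_def]
    have c0 : G T - G 0 ≤ ((τ * ∫ t in (0:ℝ)..T, d t ^ 2) + 1/(2*μ) * ∫ t in (0:ℝ)..T, g t ^ 2)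
          - μ/2 * ∫ t in (0:ℝ)..T, ε t ^ 2 := by
      rw [e1, ← e3]; exact e2
    set E := ∫ t in (0:ℝ)..T, ε t ^ 2 with hE
    set D := ∫ t in (0:ℝ)..T, d t ^ 2 with hD
    set Gg := ∫ t in (0:ℝ)..T, g t ^ 2 with hGg
    clear_value E D Gg Ig B S
    linarith only [c0, e4, e5, e6]
  have key2' : ∀ T, 0 ≤ T → (∫ t in (0:ℝ)..T, ε t ^ 2) ≤ 2/μ * S := by
    intro T hT
    have h := key2 T hT
    have h2 := mul_le_mul_of_nonneg_left h (le_of_lt (show (0:ℝ) < 2/μ by positivity))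
    calc (∫ t in (0:ℝ)..T, ε t ^ 2) = 2/μ * (μ/2 * (∫ t in (0:ℝ)..T, ε t ^ 2)) := by
          field_simp
      _ ≤ 2/μ * S := h2
  have hε2_int : IntegrableOn (fun t => ε t ^ 2) (Set.Ici (0:ℝ)) := by
    rw [integrableOn_Ici_iff_integrableOn_Ioi]
    apply integrableOn_Ioi_of_intervalIntegral_norm_bounded (2/μ * S) 0
      (fun i : ℝ => (cε.pow 2).integrableOn_Ioc) Filter.tendsto_id
    filter_upwards [Filter.eventually_ge_atTop (0:ℝ)] with T hT
    simpa [Real.norm_eq_abs, abs_pow, sq_abs] using key2' T hT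
  -- convergence of ε² to a limit
  have hprod_int : IntegrableOn (fun t => 2 * ε t * d t) (Set.Ici (0:ℝ)) := by
    have hsum : IntegrableOn (fun t => ε t ^ 2 + d t ^ 2) (Set.Ici (0:ℝ)) :=
      hε2_int.add hd2_int
    apply Integrable.mono' hsum
      ((by fun_prop : Continuous fun t => 2 * ε t * d t).aestronglyMeasurable)
    apply Filter.Eventually.of_forall
    intro x
    rw [Real.norm_eq_abs, abs_le]
    constructor <;> nlinarith [sq_nonneg (ε x + d x), sq_nonneg (ε x - d x)]
  set I := ∫ t in Set.Ioi (0:ℝ), 2 * ε t * d t with hI_def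
  have hlim : Filter.Tendsto (fun T => ∫ t in (0:ℝ)..T, 2 * ε t * d t)
      Filter.atTop (nhds I) :=
    intervalIntegral_tendsto_integral_Ioi 0 (hprod_int.mono_set Set.Ioi_subset_Ici_self)
      Filter.tendsto_id
  have hHder : ∀ t, HasDerivAt (fun t => ε t ^ 2) (2 * ε t * d t) t := by
    intro t
    exact ((hd t).pow 2).congr_deriv (by push_cast; ring)
  have hHeq : ∀ T : ℝ, ε T ^ 2 = ε 0 ^ 2 + ∫ t in (0:ℝ)..T, 2 * ε t * d t := by
    intro T
    have := FTC (fun t => ε t ^ 2) (fun t => 2 * ε t * d t) hHder (by fun_prop) T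
    linarith
  set L := ε 0 ^ 2 + I with hL_def
  have hHlim : Filter.Tendsto (fun T => ε T ^ 2) Filter.atTop (nhds L) := by
    have heq : (fun T => ε T ^ 2) = fun T => ε 0 ^ 2 + ∫ t in (0:ℝ)..T, 2 * ε t * d t :=
      funext hHeq
    rw [heq]
    exact hlim.const_add _
  have hL0 : 0 ≤ L := ge_of_tendsto' hHlim (fun T => sq_nonneg _)
  have hLzero : L = 0 := by
    by_contra hL
    have hLpos : 0 < L := lt_of_le_of_ne hL0 (Ne.symm hL)
    have hev : ∀ᶠ T in Filter.atTop, L/2 ≤ ε T ^ 2 :=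
      hHlim.eventually (eventually_ge_nhds (by linarith))
    obtain ⟨T₀, hT₀⟩ := Filter.eventually_atTop.mp hev
    have hint : IntegrableOn (fun t => ε t ^ 2) (Set.Ici (max T₀ 0)) :=
      hε2_int.mono_set (Set.Ici_subset_Ici.mpr (le_max_right _ _))
    have hconst : IntegrableOn (fun _ => L/2) (Set.Ici (max T₀ 0)) := by
      apply Integrable.mono' hint aestronglyMeasurable_const
      filter_upwards [ae_restrict_mem measurableSet_Ici] with x hx
      rw [Real.norm_eq_abs, abs_of_nonneg (by linarith)]
      exact hT₀ x (le_trans (le_max_left _ _) hx)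
    rw [integrableOn_const_iff] at hconst
    rcases hconst with h | h
    · simp at h; linarith
    · simp [Real.volume_Ici] at h
  rw [hLzero] at hHlim
  refine ⟨by simpa [sq_abs] using hε2_int, by simpa [sq_abs] using hd2_int, ?_⟩
  have hs : Filter.Tendsto (fun t => Real.sqrt (ε t ^ 2)) Filter.atTop (nhds 0) := by
    have := (Real.continuous_sqrt.tendsto 0).comp hHlim
    rw [Real.sqrt_zero] at this; exact this
  refine squeeze_zero_norm (fun t => ?_) hs
  rw [Real.norm_eq_abs, Real.sqrt_sq_eq_abs]
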